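/- For 0 < a ≤ 2λ and any C² curve α(t) = (y(t), x(t)) in ℝ × ℝᵈ lying in the hypersurface {xᵢ = e^{a y}} of the Heintze metric g = dy² + Σⱼ e^{-2λⱼ y}dxⱼ² (with λᵢ = λ), one has df(∇_{α'}α') ≥ 0, where f(y,x) = e^{ay} − xᵢ and ∇ is the Levi-Civita connection of g. Explicitly, a e^{ay} ( y'' + Σⱼ λⱼ (xⱼ')² e^{-2λⱼ y} ) − xᵢ'' + 2λ xᵢ' y' ≥ (2aλ − a²) e^{ay} (y')² ≥ 0. -/

import Mathlib

/-- convexity computation. For `0 < a ≤ 2λᵢ` and a C² curve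
`α(t) = (y(t), x(t))` lying in the hypersurface `{xᵢ = e^{a y}}` of the Heintze
metric, one has
`a e^{ay}(y'' + ∑ⱼ λⱼ (xⱼ')² e^{-2λⱼ y}) − xᵢ'' + 2λᵢ xᵢ' y' ≥ (2aλᵢ − a²) e^{ay} (y')² ≥ 0`,
i.e. `df(∇_{α'}α') ≥ 0` for `f(y,x) = e^{ay} − xᵢ`. -/
theorem convexity_computation (d : ℕ) (lam : Fin d → ℝ) (hpos : ∀ j, 0 < lam j)
    (i : Fin d) (a : ℝ) (ha : 0 < a) (ha2 : a ≤ 2 * lam i)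
    (y : ℝ → ℝ) (x : ℝ → Fin d → ℝ)
    (hy : ContDiff ℝ 2 y) (hx : ContDiff ℝ 2 x)
    (hcurve : ∀ t, x t i = Real.exp (a * y t)) (t : ℝ) :
    ((2 * a * lam i - a ^ 2) * Real.exp (a * y t) * (deriv y t) ^ 2 ≤
      a * Real.exp (a * y t) *
          (deriv (deriv y) t +
            ∑ j, lam j * (deriv (fun s => x s j) t) ^ 2 * Real.exp (-2 * lam j * y t))
        - deriv (deriv (fun s => x s i)) t
        + 2 * lam i * deriv (fun s => x s i) t * deriv y t) ∧
    0 ≤ (2 * a * lam i - a ^ 2) * Real.exp (a * y t) * (deriv y t) ^ 2 := by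
  have hyd : Differentiable ℝ y := hy.differentiable (by norm_num)
  have hyd' : Differentiable ℝ (deriv y) :=
    (hy.iterate_deriv' 1 1).differentiable (by norm_num)
  have hxi : (fun s => x s i) = fun s => Real.exp (a * y s) := funext hcurve
  -- first derivative of x_i
  have hD1 : ∀ s, HasDerivAt (fun s => Real.exp (a * y s))
      (a * deriv y s * Real.exp (a * y s)) s := by
    intro s
    have h1 : HasDerivAt (fun s => a * y s) (a * deriv y s) s :=
      ((hyd s).hasDerivAt).const_mul a
    have := (Real.hasDerivAt_exp (a * y s)).comp s h1
    simpa [mul_comm, Function.comp_def] using this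
  have hd1 : deriv (fun s => x s i) = fun s => a * deriv y s * Real.exp (a * y s) := by
    rw [hxi]; funext s; exact (hD1 s).deriv
  have hD2 : HasDerivAt (fun s => a * deriv y s * Real.exp (a * y s))
      ((a * deriv (deriv y) t) * Real.exp (a * y t)
        + (a * deriv y t) * (a * deriv y t * Real.exp (a * y t))) t := by
    have h1 : HasDerivAt (fun s => a * deriv y s) (a * deriv (deriv y) t) t :=
      ((hyd' t).hasDerivAt).const_mul a
    exact h1.mul (hD1 t)
  have hd2 : deriv (deriv (fun s => x s i)) t
      = (a * deriv (deriv y) t) * Real.exp (a * y t)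
        + (a * deriv y t) * (a * deriv y t * Real.exp (a * y t)) := by
    rw [hd1]; exact hD2.deriv
  constructor
  · rw [hd2, hd1]
    beta_reduce
    have hsum : 0 ≤ ∑ j, lam j * (deriv (fun s => x s j) t) ^ 2 * Real.exp (-2 * lam j * y t) := by
      apply Finset.sum_nonneg
      intro j _
      have := (hpos j).le
      positivity
    nlinarith [Real.exp_pos (a * y t), mul_nonneg (mul_pos ha (Real.exp_pos (a * y t))).le hsum]
  · have : 0 ≤ 2 * a * lam i - a ^ 2 := by nlinarith
    positivity
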